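/- arXiv:2305.08349 — 4 statements merged into one kernel-verified Lean document; each statement's English description precedes it below -/
import Mathlib

section
/- For every natural number N ≥ 1, there exist a unique finite set S of integers such that N = Σ_{i∈S} φ^i (where φ = (1+√5)/2) and S contains no two consecutive integers. -/
noncomputable def phi : ℝ := (1 + Real.sqrt 5) / 2

namespace BasePhi

def adm (S : Finset ℤ) : Prop := ∀ i ∈ S, i + 1 ∉ S

noncomputable def val (S : Finset ℤ) : ℝ := ∑ i ∈ S, phi ^ i


lemma two_le_sqrt5 : 2 ≤ Real.sqrt 5 := by
  have h : Real.sqrt 4 ≤ Real.sqrt 5 := Real.sqrt_le_sqrt (by norm_num)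
  rwa [show (4:ℝ) = 2^2 by norm_num, Real.sqrt_sq (by norm_num)] at h

lemma one_lt_phi : 1 < phi := by unfold phi; have := two_le_sqrt5; linarith
lemma phi_pos : 0 < phi := lt_trans one_pos one_lt_phi
lemma phi_ne : phi ≠ 0 := ne_of_gt phi_pos

lemma phi_mul : phi * phi = phi + 1 := by
  have h5 : Real.sqrt 5 * Real.sqrt 5 = 5 := Real.mul_self_sqrt (by norm_num)
  unfold phi; nlinarith [h5]

lemma zkey (j : ℤ) : phi ^ (j+2) = phi ^ (j+1) + phi ^ j := by
  have h0 := phi_ne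
  calc phi ^ (j+2) = phi ^ j * (phi * phi) := by
        rw [zpow_add₀ h0, show (2:ℤ) = 1 + 1 by norm_num, zpow_add₀ h0, zpow_one]
    _ = phi ^ j * phi + phi ^ j := by rw [phi_mul]; ring
    _ = phi ^ (j+1) + phi ^ j := by rw [zpow_add₀ h0, zpow_one]

lemma zkey' (j : ℤ) : phi ^ (j+1) + phi ^ (j-2) = 2 * phi ^ j := by
  have h1 := zkey (j-2); have h2 := zkey (j-1)
  rw [show j-2+2 = j by ring, show j-2+1 = j-1 by ring] at h1
  rw [show j-1+2 = j+1 by ring, show j-1+1 = j by ring] at h2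
  linarith

lemma zkey'' (j : ℤ) : phi ^ (j+1) - phi ^ (j-1) = phi ^ j := by
  have h2 := zkey (j-1)
  rw [show j-1+2 = j+1 by ring, show j-1+1 = j by ring] at h2
  linarith

lemma zpow_pos' (i : ℤ) : 0 < phi ^ i := zpow_pos phi_pos i

lemma zpow_mono {i j : ℤ} (h : i ≤ j) : phi ^ i ≤ phi ^ j :=
  zpow_le_zpow_right₀ (le_of_lt one_lt_phi) h

lemma adm_mono {S T : Finset ℤ} (h : T ⊆ S) (hS : adm S) : adm T :=
  fun i hi hc => hS i (h hi) (h hc)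

lemma val_erase {S : Finset ℤ} {j : ℤ} (h : j ∈ S) : val S = phi ^ j + val (S.erase j) := by
  unfold val; rw [← Finset.add_sum_erase _ _ h]


lemma insert_step {S : Finset ℤ} {j : ℤ} (hadm : adm S) (hj : j ∉ S) (hjm : j - 1 ∉ S)
    (hj1 : j + 1 ∉ S) :
    ∃ T : Finset ℤ, adm T ∧ val T = val S + phi ^ j ∧ ∀ i < j, (i ∈ T ↔ i ∈ S) := by
  refine ⟨insert j S, ?_, ?_, ?_⟩
  · intro i hi hc
    rcases Finset.mem_insert.mp hi with rfl | hi'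
    · rcases Finset.mem_insert.mp hc with h | h
      · omega
      · exact hj1 h
    · rcases Finset.mem_insert.mp hc with h | h
      · have : i = j - 1 := by omega
        exact hjm (this ▸ hi')
      · exact hadm i hi' h
  · unfold val; rw [Finset.sum_insert hj]; ring
  · intro i hij
    simp only [Finset.mem_insert]
    constructor
    · rintro (rfl | h); · omega
      · exact h
    · exact Or.inr

lemma addUp : ∀ (n : ℕ) (S : Finset ℤ) (j : ℤ),
    (S.filter (fun i => j ≤ i)).card ≤ n → adm S → j ∉ S → j - 1 ∉ S →
    ∃ T : Finset ℤ, adm T ∧ val T = val S + phi ^ j ∧ ∀ i < j, (i ∈ T ↔ i ∈ S) := by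
  intro n
  induction n with
  | zero =>
    intro S j hcard hadm hj hjm
    have hj1 : j + 1 ∉ S := by
      intro h
      have hm : j + 1 ∈ S.filter (fun i => j ≤ i) := Finset.mem_filter.mpr ⟨h, by omega⟩
      have := Finset.card_pos.mpr ⟨_, hm⟩
      omega
    exact insert_step hadm hj hjm hj1
  | succ n ih =>
    intro S j hcard hadm hj hjm
    by_cases hj1 : j + 1 ∈ S
    · have hj2 : j + 2 ∉ S := by
        intro h; exact hadm (j+1) hj1 (by rwa [show j+1+1 = j+2 by ring])
      set S' := S.erase (j+1) with hS'
      have hsub : S' ⊆ S := Finset.erase_subset _ _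
      have hadm' : adm S' := adm_mono hsub hadm
      have hmem : j + 1 ∈ S.filter (fun i => j ≤ i) := Finset.mem_filter.mpr ⟨hj1, by omega⟩
      have hcard' : (S'.filter (fun i => j + 2 ≤ i)).card ≤ n := by
        have hsub2 : S'.filter (fun i => j + 2 ≤ i) ⊆ (S.filter (fun i => j ≤ i)).erase (j+1) := by
          intro i hi
          simp only [hS', Finset.mem_filter, Finset.mem_erase] at hi ⊢
          obtain ⟨⟨h1, h2⟩, h3⟩ := hi
          exact ⟨h1, h2, by omega⟩
        have h1 := Finset.card_le_card hsub2
        have h2 := Finset.card_erase_of_mem hmem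
        omega
      obtain ⟨T, hadmT, hvalT, hagT⟩ := ih S' (j+2) hcard' hadm'
        (fun h => hj2 (hsub h))
        (by rw [show j+2-1 = j+1 by ring]; exact Finset.notMem_erase _ _)
      refine ⟨T, hadmT, ?_, ?_⟩
      · have hv : val S = phi ^ (j+1) + val S' := val_erase hj1
        have hk := zkey j
        rw [hvalT]; linarith
      · intro i hij
        rw [hagT i (by omega)]
        simp only [hS', Finset.mem_erase]
        constructor
        · exact And.right
        · intro h; exact ⟨by omega, h⟩
    · exact insert_step hadm hj hjm hj1


lemma addPow : ∀ (a b : ℕ) (S : Finset ℤ) (j : ℤ),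
    (S.filter (fun i => i ≤ j + 1)).card ≤ a → (S.filter (fun i => j ≤ i)).card ≤ b → adm S →
    ∃ T : Finset ℤ, adm T ∧ val T = val S + phi ^ j := by
  intro a
  induction a using Nat.strong_induction_on with
  | _ a iha =>
  intro b
  induction b using Nat.strong_induction_on with
  | _ b ihb =>
  intro S j ha hb hadm
  by_cases hj : j ∈ S
  · -- j itself occupied : 2φ^j = φ^(j+1) + φ^(j-2)
    have hj1 : j + 1 ∉ S := hadm j hj
    have hamem : j ∈ S.filter (fun i => i ≤ j + 1) := Finset.mem_filter.mpr ⟨hj, by omega⟩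
    have ha1 : 1 ≤ a := le_trans (Finset.card_pos.mpr ⟨_, hamem⟩) ha
    set S' := S.erase j with hS'
    have hadm' : adm S' := adm_mono (Finset.erase_subset _ _) hadm
    obtain ⟨T₁, hadm₁, hval₁, hag₁⟩ := addUp ((S'.filter (fun i => j + 1 ≤ i)).card) S' (j+1)
      le_rfl hadm'
      (fun h => hj1 (Finset.erase_subset _ _ h))
      (by rw [show j+1-1 = j by ring]; exact Finset.notMem_erase _ _)
    have hfeq : T₁.filter (fun i => i ≤ j - 1) = S.filter (fun i => i ≤ j - 1) := by
      ext i
      simp only [Finset.mem_filter]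
      constructor
      · rintro ⟨hiT, hle⟩
        have h := (hag₁ i (by omega)).mp hiT
        rw [hS', Finset.mem_erase] at h
        exact ⟨h.2, hle⟩
      · rintro ⟨hiS, hle⟩
        refine ⟨(hag₁ i (by omega)).mpr ?_, hle⟩
        rw [hS', Finset.mem_erase]
        exact ⟨by omega, hiS⟩
    have hacard : (T₁.filter (fun i => i ≤ (j-2) + 1)).card ≤ a - 1 := by
      rw [show (j-2)+1 = j - 1 by ring, hfeq]
      have hsub : S.filter (fun i => i ≤ j - 1) ⊆ (S.filter (fun i => i ≤ j + 1)).erase j := by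
        intro i hi
        simp only [Finset.mem_filter, Finset.mem_erase] at hi ⊢
        exact ⟨by omega, hi.1, by omega⟩
      have h1 := Finset.card_le_card hsub
      have h2 := Finset.card_erase_of_mem hamem
      omega
    obtain ⟨T, hadmT, hvalT⟩ := iha (a-1) (by omega) ((T₁.filter (fun i => (j-2) ≤ i)).card)
      T₁ (j-2) hacard le_rfl hadm₁
    refine ⟨T, hadmT, ?_⟩
    have hv : val S = phi ^ j + val S' := val_erase hj
    have hk := zkey' j
    rw [hvalT, hval₁]; linarith
  · by_cases hj1 : j + 1 ∈ S
    · -- merge upward: φ^j + φ^(j+1) = φ^(j+2)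
      have hj2 : j + 2 ∉ S := by
        intro h; exact hadm (j+1) hj1 (by rwa [show j+1+1 = j+2 by ring])
      set S' := S.erase (j+1) with hS'
      have hadm' : adm S' := adm_mono (Finset.erase_subset _ _) hadm
      have hbmem : j + 1 ∈ S.filter (fun i => j ≤ i) := Finset.mem_filter.mpr ⟨hj1, by omega⟩
      have hb1 : 1 ≤ b := le_trans (Finset.card_pos.mpr ⟨_, hbmem⟩) hb
      have hbcard : (S'.filter (fun i => (j+2) ≤ i)).card ≤ b - 1 := by
        have hsub : S'.filter (fun i => (j+2) ≤ i) ⊆ (S.filter (fun i => j ≤ i)).erase (j+1) := by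
          intro i hi
          simp only [hS', Finset.mem_filter, Finset.mem_erase] at hi ⊢
          obtain ⟨⟨h1, h2⟩, h3⟩ := hi
          exact ⟨h1, h2, by omega⟩
        have h1 := Finset.card_le_card hsub
        have h2 := Finset.card_erase_of_mem hbmem
        omega
      have hamem : j + 1 ∈ S.filter (fun i => i ≤ j + 1) := Finset.mem_filter.mpr ⟨hj1, by omega⟩
      have hacard2 : (S'.filter (fun i => i ≤ (j+2)+1)).card ≤ a := by
        have hsub : S'.filter (fun i => i ≤ (j+2)+1) ⊆
            insert (j+3) ((S.filter (fun i => i ≤ j+1)).erase (j+1)) := by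
          intro i hi
          simp only [hS', Finset.mem_filter, Finset.mem_erase, Finset.mem_insert] at hi ⊢
          obtain ⟨⟨h1, h2⟩, h3⟩ := hi
          by_cases hcase : i = j + 3
          · exact Or.inl hcase
          · refine Or.inr ⟨h1, h2, ?_⟩
            have : i ≠ j + 2 := fun hc => hj2 (hc ▸ h2)
            omega
        have h1 := Finset.card_le_card hsub
        have h2 := Finset.card_insert_le (j+3) ((S.filter (fun i => i ≤ j+1)).erase (j+1))
        have h3 := Finset.card_erase_of_mem hamem
        have h4 := Finset.card_pos.mpr ⟨_, hamem⟩
        omega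
      obtain ⟨T, hadmT, hvalT⟩ := ihb (b-1) (by omega) S' (j+2) hacard2 hbcard hadm'
      refine ⟨T, hadmT, ?_⟩
      have hv : val S = phi ^ (j+1) + val S' := val_erase hj1
      have hk := zkey j
      rw [hvalT]; linarith
    · by_cases hjm : j - 1 ∈ S
      · -- merge: φ^(j-1) + φ^j = φ^(j+1)
        set S' := S.erase (j-1) with hS'
        have hadm' : adm S' := adm_mono (Finset.erase_subset _ _) hadm
        obtain ⟨T, hadmT, hvalT, _⟩ := addUp ((S'.filter (fun i => (j+1) ≤ i)).card) S' (j+1)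
          le_rfl hadm'
          (fun h => hj1 (Finset.erase_subset _ _ h))
          (by rw [show j+1-1 = j by ring]; exact fun h => hj (Finset.erase_subset _ _ h))
        refine ⟨T, hadmT, ?_⟩
        have hv : val S = phi ^ (j-1) + val S' := val_erase hjm
        have hk := zkey'' j
        rw [hvalT]; linarith
      · obtain ⟨T, h1, h2, _⟩ := insert_step hadm hj hjm hj1
        exact ⟨T, h1, h2⟩


lemma val_empty : val (∅ : Finset ℤ) = 0 := by unfold val; simp

lemma val_lt_of_le : ∀ (n : ℕ) (S : Finset ℤ) (m : ℤ),
    S.card ≤ n → adm S → (∀ i ∈ S, i ≤ m) → val S < phi ^ (m+1) := by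
  intro n
  induction n with
  | zero =>
    intro S m hc _ _
    have hS : S = ∅ := Finset.card_eq_zero.mp (by omega)
    rw [hS, val_empty]
    exact zpow_pos' _
  | succ n ih =>
    intro S m hc hadm hle
    rcases Finset.eq_empty_or_nonempty S with rfl | hne
    · rw [val_empty]; exact zpow_pos' _
    · set M := S.max' hne with hMdef
      have hM : M ∈ S := S.max'_mem hne
      have hMle : M ≤ m := hle M hM
      have hkey : ∀ i ∈ S.erase M, i ≤ M - 2 := by
        intro i hi
        obtain ⟨hne', hiS⟩ := Finset.mem_erase.mp hi
        have hle' : i ≤ M := S.le_max' i hiS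
        have hne'' : i ≠ M - 1 := by
          intro h
          exact hadm i hiS (by rw [h, show M-1+1 = M by ring]; exact hM)
        omega
      have hpos := Finset.card_pos.mpr hne
      have hcard : (S.erase M).card ≤ n := by
        have := Finset.card_erase_of_mem hM; omega
      have hIH := ih (S.erase M) (M-2) hcard (adm_mono (Finset.erase_subset _ _) hadm) hkey
      rw [show M-2+1 = M-1 by ring] at hIH
      have hv : val S = phi ^ M + val (S.erase M) := val_erase hM
      have h2 := zkey (M-1)
      rw [show M-1+2 = M+1 by ring, show M-1+1 = M by ring] at h2
      have hmono : phi ^ (M+1) ≤ phi ^ (m+1) := zpow_mono (by omega)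
      linarith

lemma val_pos {S : Finset ℤ} (h : S.Nonempty) : 0 < val S :=
  Finset.sum_pos (fun i _ => zpow_pos' i) h

lemma max_le_val {S : Finset ℤ} (h : S.Nonempty) : phi ^ (S.max' h) ≤ val S := by
  have hv := val_erase (S.max'_mem h)
  have h0 : (0:ℝ) ≤ val (S.erase (S.max' h)) :=
    Finset.sum_nonneg (fun i _ => le_of_lt (zpow_pos' i))
  linarith

lemma val_lt_val {S T : Finset ℤ} (hS : adm S) (hSne : S.Nonempty) (hTne : T.Nonempty)
    (h : S.max' hSne < T.max' hTne) : val S < val T := by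
  have h1 : val S < phi ^ (S.max' hSne + 1) :=
    val_lt_of_le S.card S (S.max' hSne) le_rfl hS (fun i hi => S.le_max' i hi)
  have h2 : phi ^ (S.max' hSne + 1) ≤ phi ^ (T.max' hTne) := zpow_mono (by omega)
  have h3 := max_le_val hTne
  linarith

lemma uniq : ∀ (n : ℕ) (S T : Finset ℤ),
    S.card + T.card ≤ n → adm S → adm T → val S = val T → S = T := by
  intro n
  induction n with
  | zero =>
    intro S T hc _ _ _
    have hS : S = ∅ := Finset.card_eq_zero.mp (by omega)
    have hT : T = ∅ := Finset.card_eq_zero.mp (by omega)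
    rw [hS, hT]
  | succ n ih =>
    intro S T hc hS hT hval
    rcases Finset.eq_empty_or_nonempty S with rfl | hSne
    · rcases Finset.eq_empty_or_nonempty T with rfl | hTne
      · rfl
      · exfalso
        have := val_pos hTne
        rw [val_empty] at hval; linarith
    · rcases Finset.eq_empty_or_nonempty T with rfl | hTne
      · exfalso
        have := val_pos hSne
        rw [val_empty] at hval; linarith
      · have hst : S.max' hSne = T.max' hTne := by
          by_contra hne
          rcases lt_or_gt_of_ne hne with h | h
          · have := val_lt_val hS hSne hTne h; linarith
          · have := val_lt_val hT hTne hSne h; linarith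
        have hvS := val_erase (S.max'_mem hSne)
        have hvT := val_erase (T.max'_mem hTne)
        have hps : phi ^ (S.max' hSne) = phi ^ (T.max' hTne) := by rw [hst]
        have hval' : val (S.erase (S.max' hSne)) = val (T.erase (T.max' hTne)) := by
          rw [hvS, hvT, hps] at hval; linarith
        have hpS := Finset.card_pos.mpr hSne
        have hpT := Finset.card_pos.mpr hTne
        have hcS := Finset.card_erase_of_mem (S.max'_mem hSne)
        have hcT := Finset.card_erase_of_mem (T.max'_mem hTne)
        have heq := ih _ _ (by omega) (adm_mono (Finset.erase_subset _ _) hS)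
          (adm_mono (Finset.erase_subset _ _) hT) hval'
        have h1 : S = insert (S.max' hSne) (S.erase (S.max' hSne)) :=
          (Finset.insert_erase (S.max'_mem hSne)).symm
        rw [h1, heq, hst, Finset.insert_erase (T.max'_mem hTne)]

lemma exists_rep : ∀ N : ℕ, 1 ≤ N → ∃ S : Finset ℤ, adm S ∧ val S = N := by
  intro N hN
  induction N with
  | zero => omega
  | succ n ih =>
    by_cases h : n = 0
    · subst h
      refine ⟨{0}, ?_, ?_⟩
      · intro i hi hc
        simp only [Finset.mem_singleton] at hi hc
        omega
      · unfold val
        simp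
    · obtain ⟨S, hadm, hval⟩ := ih (by omega)
      obtain ⟨T, hadmT, hvalT⟩ := addPow _ _ S 0 le_rfl le_rfl hadm
      refine ⟨T, hadmT, ?_⟩
      rw [hvalT, hval]
      push_cast
      simp

end BasePhi


/-- Every natural number `N ≥ 1` has a unique base phi expansion: a finite set `S ⊆ ℤ`
with no two consecutive integers such that `N = ∑_{i ∈ S} φ^i`. -/
theorem base_phi_expansion_exists_unique (N : ℕ) (hN : 1 ≤ N) :
    ∃! S : Finset ℤ, (∀ i ∈ S, i + 1 ∉ S) ∧ (N : ℝ) = ∑ i ∈ S, phi ^ i := by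
  obtain ⟨S, hadm, hval⟩ := BasePhi.exists_rep N hN
  refine ⟨S, ⟨hadm, ?_⟩, ?_⟩
  · exact hval.symm
  · rintro T ⟨hadmT, hvalT⟩
    refine BasePhi.uniq (T.card + S.card) T S le_rfl hadmT hadm ?_
    show BasePhi.val T = BasePhi.val S
    unfold BasePhi.val
    rw [← hvalT]
    exact hval.symm ▸ rfl
end

section
/- If N is a natural number with base phi expansion N = Σ_{i∈S} φ^i where S ⊆ ℤ has no two consecutive integers, then N equals the ceiling of the sum of the nonnegative-exponent part: N = ⌈Σ_{i∈S, i≥0} φ^i⌉. -/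
lemma phi_pos : 0 < phi := by
  have : (0:ℝ) ≤ Real.sqrt 5 := Real.sqrt_nonneg 5
  unfold phi; linarith

lemma one_lt_phi : 1 < phi := by
  have h : (1:ℝ) < Real.sqrt 5 := by
    have := Real.sqrt_lt_sqrt (by norm_num : (0:ℝ) ≤ 1) (by norm_num : (1:ℝ) < 5)
    simpa using this
  unfold phi; linarith

lemma phi_sq : phi ^ 2 = phi + 1 := by
  have h : Real.sqrt 5 ^ 2 = 5 := Real.sq_sqrt (by norm_num)
  unfold phi; nlinarith [h]

lemma phi_ne_zero : phi ≠ 0 := ne_of_gt phi_pos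

lemma phi_zpow_rec (a : ℤ) : phi ^ (a + 1) = phi ^ a + phi ^ (a - 1) := by
  have h1 : phi ^ (a + 1) = phi ^ (a - 1) * phi ^ (2:ℕ) := by
    rw [← zpow_natCast phi 2, ← zpow_add₀ phi_ne_zero]; ring_nf
  have h2 : phi ^ (a - 1) * phi = phi ^ a := by
    rw [← zpow_add_one₀ phi_ne_zero]; ring_nf
  rw [h1, phi_sq]; nlinarith [h2]

lemma sum_lt (T : Finset ℤ) (m : ℤ) (hc : ∀ i ∈ T, i + 1 ∉ T)
    (hm : ∀ i ∈ T, i ≤ m) : ∑ i ∈ T, phi ^ i < phi ^ (m + 1) := by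
  induction T using Finset.strongInduction generalizing m with
  | _ T ih =>
    rcases T.eq_empty_or_nonempty with rfl | hT
    · simpa using zpow_pos phi_pos (m + 1)
    · set a := T.max' hT with ha
      have haT : a ∈ T := T.max'_mem hT
      have hsub : T.erase a ⊂ T := Finset.erase_ssubset haT
      have hbound : ∀ i ∈ T.erase a, i ≤ a - 2 := by
        intro i hi
        have hiT := Finset.mem_of_mem_erase hi
        have hia : i ≠ a := Finset.ne_of_mem_erase hi
        have hle : i ≤ a := T.le_max' i hiT
        have : i ≠ a - 1 := by
          intro h; subst h
          exact hc _ hiT (by simpa using haT)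
        omega
      have hrec := ih _ hsub (a - 2) (fun i hi h => hc i (Finset.mem_of_mem_erase hi)
        (Finset.mem_of_mem_erase h)) hbound
      have hsum : ∑ i ∈ T, phi ^ i = phi ^ a + ∑ i ∈ T.erase a, phi ^ i :=
        (Finset.add_sum_erase T _ haT).symm
      have h1 : phi ^ a + phi ^ (a - 2 + 1) = phi ^ (a + 1) := by
        have := phi_zpow_rec a
        have e : a - 2 + 1 = a - 1 := by ring
        rw [e]; linarith
      have h2 : phi ^ (a + 1) ≤ phi ^ (m + 1) := by
        apply zpow_le_zpow_right₀ (le_of_lt one_lt_phi)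
        have := T.le_max' a haT
        have := hm a haT
        omega
      rw [hsum]; linarith

/-- If `N = ∑_{i ∈ S} φ^i` is the base phi expansion of `N`, then `N` equals the ceiling
of the nonnegative-exponent part of the sum. -/
theorem base_phi_ceil_positive_part (N : ℕ) (S : Finset ℤ)
    (hcons : ∀ i ∈ S, i + 1 ∉ S)
    (hsum : (N : ℝ) = ∑ i ∈ S, phi ^ i) :
    (N : ℤ) = ⌈∑ i ∈ S.filter (fun i => 0 ≤ i), phi ^ i⌉ := by
  classical
  set T := S.filter (fun i => ¬ 0 ≤ i) with hT
  have hsplit : ∑ i ∈ S, phi ^ i =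
      (∑ i ∈ S.filter (fun i => 0 ≤ i), phi ^ i) + ∑ i ∈ T, phi ^ i := by
    rw [hT, Finset.sum_filter_add_sum_filter_not]
  have hTc : ∀ i ∈ T, i + 1 ∉ T := by
    intro i hi h
    exact hcons i (Finset.mem_of_mem_filter i hi) (Finset.mem_of_mem_filter _ h)
  have hTm : ∀ i ∈ T, i ≤ -1 := by
    intro i hi
    have h2 := (Finset.mem_filter.mp hi).2
    push_neg at h2
    omega
  have hlt : ∑ i ∈ T, phi ^ i < 1 := by
    have h := sum_lt T (-1) hTc hTm
    norm_num at h
    exact h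
  have hge : (0:ℝ) ≤ ∑ i ∈ T, phi ^ i :=
    Finset.sum_nonneg fun i _ => le_of_lt (zpow_pos phi_pos i)
  rw [hsplit] at hsum
  symm
  rw [Int.ceil_eq_iff]
  push_cast
  constructor <;> linarith
end

section
/- Let V(n) = p⌊nφ⌋ + qn + r be a generalized Beatty sequence, and let A(n) = ⌊nφ⌋ and B(n) = ⌊nφ⌋ + n be the lower and upper Wythoff sequences. Then V(A(n)) = (p+q)⌊nφ⌋ + pn + (r−p) and V(B(n)) = (2p+q)⌊nφ⌋ + (p+q)n + r for all n ≥ 1. -/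
lemma sqrt5_sq : Real.sqrt 5 ^ 2 = 5 := Real.sq_sqrt (by norm_num)

lemma sqrt5_lt : Real.sqrt 5 < 3 := by
  nlinarith [sqrt5_sq, Real.sqrt_nonneg 5]

lemma sqrt5_gt : 2 < Real.sqrt 5 := by
  nlinarith [sqrt5_sq, Real.sqrt_nonneg 5]

lemma irr5 : Irrational (Real.sqrt 5) := by
  have : Nat.Prime 5 := by norm_num
  exact this.irrational_sqrt

lemma nphi_ne (n : ℕ) (hn : 1 ≤ n) (a : ℤ) : (n : ℝ) * phi ≠ a := by
  intro h
  have hn0 : (n : ℝ) ≠ 0 := by positivity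
  have : Real.sqrt 5 = (2 * a - n) / n := by
    unfold phi at h
    field_simp at h ⊢
    linarith
  exact irr5 (by rw [this]; push_cast; exact ⟨(2*a - n)/n, by push_cast; ring⟩)

/-- Composition of a generalized Beatty sequence `V(p,q,r)` with the lower and upper
Wythoff sequences: `V∘A = V(p+q, p, r-p)` and `V∘B = V(2p+q, p+q, r)`. -/
theorem gbs_comp_wythoff (p q r : ℤ) (V : ℤ → ℤ)
    (hV : ∀ m : ℤ, V m = p * ⌊(m : ℝ) * phi⌋ + q * m + r)
    (n : ℕ) (hn : 1 ≤ n) :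
    V ⌊(n : ℝ) * phi⌋ = (p + q) * ⌊(n : ℝ) * phi⌋ + p * (n : ℤ) + (r - p) ∧
    V (⌊(n : ℝ) * phi⌋ + (n : ℤ)) = (2 * p + q) * ⌊(n : ℝ) * phi⌋ + (p + q) * (n : ℤ) + r := by
  set a : ℤ := ⌊(n : ℝ) * phi⌋ with ha
  have h1 : (a : ℝ) ≤ (n : ℝ) * phi := Int.floor_le _
  have h2 : (n : ℝ) * phi < a + 1 := Int.lt_floor_add_one _
  have hne : (n : ℝ) * phi ≠ a := nphi_ne n hn a
  have h1' : (a : ℝ) < (n : ℝ) * phi := lt_of_le_of_ne h1 (Ne.symm hne)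
  have hs2 := sqrt5_sq
  have hsl := sqrt5_lt
  have hsg := sqrt5_gt
  -- nφ² = nφ + n
  have key : (n : ℝ) * phi * phi = (n : ℝ) * phi + n := by
    unfold phi; nlinarith [hs2]
  have hphi1 : (1:ℝ) < phi := by unfold phi; nlinarith
  have hphi2 : phi < 2 := by unfold phi; nlinarith
  have fa : ⌊(a : ℝ) * phi⌋ = a + n - 1 := by
    rw [Int.floor_eq_iff]
    constructor
    · push_cast; nlinarith
    · push_cast; nlinarith
  have fb : ⌊((a + n : ℤ) : ℝ) * phi⌋ = 2 * a + n := by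
    rw [Int.floor_eq_iff]
    constructor
    · push_cast; nlinarith
    · push_cast; nlinarith
  constructor
  · rw [hV a, fa]; ring
  · rw [hV (a + n), fb]; ring
end

section
/- There do not exist a real number α > 1 and integers p, q, r such that the sequence of first differences of (p⌊nα⌋ + qn + r)_{n≥1} equals the fixed point of the substitution a ↦ aab, b ↦ ab on a two-letter integer alphabet {a,b} with a ≠ b. -/
/-- The substitution `h : a ↦ aab, b ↦ ab` on `{a,b}`, encoded on `Bool` with
`false ↔ a`, `true ↔ b`. -/
def hsub : List Bool → List Bool :=
  fun w => w.flatMap fun x => if x then [false, true] else [false, false, true]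

/-- The fixed point `x_H` of `h` starting with `a` (= `false`), given letterwise:
`h^[k]([a])` are nested prefixes of `x_H`. -/
def xH : ℕ → Bool := fun n => (hsub^[n + 1] [false]).getD n true

lemma hsub_append (u v : List Bool) : hsub (u ++ v) = hsub u ++ hsub v := by
  simp [hsub]

lemma hsub_prefix {u v : List Bool} (h : u <+: v) : hsub u <+: hsub v := by
  obtain ⟨t, rfl⟩ := h
  rw [hsub_append]
  exact List.prefix_append _ _

lemma iter_prefix_succ (k : ℕ) : hsub^[k] [false] <+: hsub^[k + 1] [false] := by
  induction k with
  | zero => decide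
  | succ k ih =>
    rw [Function.iterate_succ_apply', Function.iterate_succ_apply' hsub (k + 1)]
    exact hsub_prefix ih

lemma iter_prefix {j k : ℕ} (h : j ≤ k) : hsub^[j] [false] <+: hsub^[k] [false] := by
  induction k with
  | zero => simp_all
  | succ k ih =>
    rcases Nat.lt_or_ge j (k + 1) with h' | h'
    · exact (ih (Nat.lt_succ_iff.mp h')).trans (iter_prefix_succ k)
    · have hjk : j = k + 1 := le_antisymm h h'
      subst hjk; exact List.prefix_refl _

lemma hsub_length (w : List Bool) : 2 * w.length ≤ (hsub w).length := by
  induction w with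
  | nil => simp [hsub]
  | cons x t ih =>
    cases x
    · have hc : (hsub (false :: t)).length = 3 + (hsub t).length := by simp [hsub]; omega
      rw [hc, List.length_cons]; omega
    · have hc : (hsub (true :: t)).length = 2 + (hsub t).length := by simp [hsub]; omega
      rw [hc, List.length_cons]; omega

lemma iter_length (k : ℕ) : 2 ^ k ≤ (hsub^[k] [false]).length := by
  induction k with
  | zero => simp
  | succ k ih =>
    rw [Function.iterate_succ_apply']
    calc 2 ^ (k + 1) = 2 * 2 ^ k := by ring
    _ ≤ 2 * (hsub^[k] [false]).length := by omega
    _ ≤ _ := hsub_length _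

lemma getD_of_prefix {u v : List Bool} (h : u <+: v) {n : ℕ} (hn : n < u.length)
    (d : Bool) : v.getD n d = u.getD n d := by
  obtain ⟨t, rfl⟩ := h
  rw [List.getD_append _ _ _ _ hn]

lemma xH_eq_getD (K : ℕ) {n : ℕ} (hn : n < (hsub^[K] [false]).length) :
    xH n = (hsub^[K] [false]).getD n true := by
  have hlen : n < (hsub^[n + 1] [false]).length := by
    have h1 : n < 2 ^ (n + 1) :=
      lt_of_lt_of_le (Nat.lt_two_pow_self (n := n)) (Nat.pow_le_pow_right (by norm_num) (Nat.le_succ n))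
    exact lt_of_lt_of_le h1 (iter_length (n + 1))
  rcases Nat.le_total (n + 1) K with h | h
  · exact (getD_of_prefix (iter_prefix h) hlen true).symm
  · exact getD_of_prefix (iter_prefix h) hn true

lemma sum_ite_getD (l : List Bool) :
    ∀ N, N ≤ l.length →
      (∑ n ∈ Finset.range N, (if l.getD n true then (1 : ℤ) else 0)) =
        ((l.take N).count true : ℤ) := by
  intro N
  induction N with
  | zero => simp
  | succ N ih =>
    intro hN
    have hNl : N < l.length := hN
    rw [Finset.sum_range_succ, ih (le_of_lt hNl)]
    rw [List.take_succ, List.getElem?_eq_getElem hNl]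
    rw [List.count_append, List.getD_eq_getElem l true hNl]
    cases h : l[N] <;> simp [h]

lemma len3 : (hsub^[3] [false]).length = 21 := by decide

/-- No generalized Beatty sequence `(p⌊nα⌋ + qn + r)_{n ≥ 1}` with `α > 1` has first
difference sequence equal to the fixed point `x_H` of `a ↦ aab, b ↦ ab` on a
two-letter integer alphabet `{a, b}` with `a ≠ b`. -/
theorem no_gbs_with_delta_xH :
    ¬ ∃ (α : ℝ) (p q r a b : ℤ), 1 < α ∧ a ≠ b ∧
      ∀ n : ℕ,
        (p * ⌊((n : ℝ) + 2) * α⌋ + q * ((n : ℤ) + 2) + r) -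
          (p * ⌊((n : ℝ) + 1) * α⌋ + q * ((n : ℤ) + 1) + r) =
        (if xH n = false then a else b) := by
  rintro ⟨α, p, q, r, a, b, hα, hab, H⟩
  set f : ℕ → ℤ := fun n => ⌊((n : ℝ) + 2) * α⌋ - ⌊((n : ℝ) + 1) * α⌋ with hf
  have Hf : ∀ n, p * f n + q = (if xH n = false then a else b) := by
    intro n
    have hn := H n
    simp only [hf]
    linear_combination hn
  have hxH0 : xH 0 = false := by decide
  have hxH2 : xH 2 = true := by decide
  have h0 : p * f 0 + q = a := by rw [Hf 0, hxH0]; simp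
  have h2 : p * f 2 + q = b := by rw [Hf 2, hxH2]; simp
  have hp : p ≠ 0 := by
    intro hp0
    apply hab
    rw [hp0, zero_mul, zero_add] at h0 h2
    omega
  have hval : ∀ n, f n = if xH n then f 2 else f 0 := by
    intro n
    have hn := Hf n
    cases hx : xH n with
    | false =>
      rw [hx] at hn
      norm_num at hn ⊢
      have hz : p * (f n - f 0) = 0 := by rw [mul_sub]; linarith
      rcases mul_eq_zero.mp hz with h | h
      · exact absurd h hp
      · linarith
    | true =>
      rw [hx] at hn
      norm_num at hn ⊢
      have hz : p * (f n - f 2) = 0 := by rw [mul_sub]; linarith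
      rcases mul_eq_zero.mp hz with h | h
      · exact absurd h hp
      · linarith
  have hfb : ∀ n : ℕ, ⌊α⌋ ≤ f n ∧ f n ≤ ⌊α⌋ + 1 := by
    intro n
    have hx2 : ((n : ℝ) + 2) * α = ((n : ℝ) + 1) * α + α := by ring
    constructor
    · have hl : ⌊((n : ℝ) + 1) * α⌋ + ⌊α⌋ ≤ ⌊((n : ℝ) + 2) * α⌋ := by
        apply Int.le_floor.mpr
        push_cast
        rw [hx2]
        exact add_le_add (Int.floor_le _) (Int.floor_le _)
      simp only [hf]; omega
    · have hu : ⌊((n : ℝ) + 2) * α⌋ < ⌊((n : ℝ) + 1) * α⌋ + ⌊α⌋ + 2 := by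
        apply Int.floor_lt.mpr
        push_cast
        rw [hx2]
        have h1 := Int.lt_floor_add_one (((n : ℝ) + 1) * α)
        have h2 := Int.lt_floor_add_one α
        linarith
      simp only [hf]; omega
  set u : ℤ := f 0 with hu
  set v : ℤ := f 2 with hv
  have huv : u ≠ v := by
    intro h
    exact hab (by rw [← h0, ← h2, h])
  set B : ℕ → ℤ := fun N => ∑ n ∈ Finset.range N, (if xH n then (1 : ℤ) else 0) with hB
  have key : ∀ N : ℕ, ⌊((N : ℝ) + 1) * α⌋ = ⌊α⌋ + N * u + (v - u) * B N := by
    intro N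
    induction N with
    | zero => simp [hB]
    | succ N ih =>
      have hcast : ((N + 1 : ℕ) : ℝ) + 1 = (N : ℝ) + 2 := by push_cast; ring
      rw [hcast]
      have hfN : ⌊((N : ℝ) + 2) * α⌋ = f N + ⌊((N : ℝ) + 1) * α⌋ := by
        simp only [hf]; ring
      have hBsucc : B (N + 1) = B N + (if xH N then 1 else 0) := by
        simp only [hB]
        rw [Finset.sum_range_succ]
      rw [hfN, ih, hBsucc, hval N]
      cases hx : xH N <;> simp only [if_pos rfl, if_neg Bool.false_ne_true] <;>
        push_cast <;> ring
  have Bval : ∀ N, N ≤ 21 → B N = (((hsub^[3] [false]).take N).count true : ℤ) := by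
    intro N hN
    rw [hB]
    rw [← sum_ite_getD (hsub^[3] [false]) N (by rw [len3]; omega)]
    refine Finset.sum_congr rfl fun n hn => ?_
    rw [xH_eq_getD 3 (by rw [len3]; have := Finset.mem_range.mp hn; omega)]
  have hB2 : B 2 = 0 := by
    rw [Bval 2 (by norm_num)]
    have hc : ((hsub^[3] [false]).take 2).count true = 0 := by decide
    rw [hc]; norm_num
  have hB8 : B 8 = 3 := by
    rw [Bval 8 (by norm_num)]
    have hc : ((hsub^[3] [false]).take 8).count true = 3 := by decide
    rw [hc]; norm_num
  have hb2 := key 2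
  have hb8 := key 8
  rw [hB2] at hb2
  rw [hB8] at hb8
  have l2 := Int.sub_one_lt_floor ((((2 : ℕ) : ℝ) + 1) * α)
  have u2 := Int.floor_le ((((2 : ℕ) : ℝ) + 1) * α)
  rw [hb2] at l2 u2
  have l8 := Int.sub_one_lt_floor ((((8 : ℕ) : ℝ) + 1) * α)
  have u8 := Int.floor_le ((((8 : ℕ) : ℝ) + 1) * α)
  rw [hb8] at l8 u8
  push_cast at l2 u2 l8 u8
  have hcase : (u = ⌊α⌋ ∧ v = ⌊α⌋ + 1) ∨ (u = ⌊α⌋ + 1 ∧ v = ⌊α⌋) := by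
    have h1 := hfb 0
    have h2 := hfb 2
    rw [← hu] at h1
    rw [← hv] at h2
    omega
  rcases hcase with ⟨h1, h2⟩ | ⟨h1, h2⟩
  · have e1 : (u : ℝ) = (⌊α⌋ : ℝ) := by exact_mod_cast h1
    have e2 : (v : ℝ) = (⌊α⌋ : ℝ) + 1 := by exact_mod_cast h2
    linarith
  · have e1 : (u : ℝ) = (⌊α⌋ : ℝ) + 1 := by exact_mod_cast h1
    have e2 : (v : ℝ) = (⌊α⌋ : ℝ) := by exact_mod_cast h2
    linarith
end
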